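/- Under the same setting (h·I ⪯ H_k ⪯ H·I for k ≥ K-M, ‖H_k‖ ≤ H otherwise, 0 < α ≤ 1/H, 0 < h ≤ H, M ≤ L ≤ K), the truncated estimate satisfies ‖∏_{k=0}^{K-1}(I - α H_k) g − ∏_{k=K-L}^{K-1}(I - α H_k) g‖ ≤ [(1+αH)^{K-M} − (1+αH)^{L-M}](1-αh)^M ‖g‖. -/

import Mathlib

open Matrix Finset

set_option synthInstance.maxHeartbeats 1000000
set_option maxHeartbeats 1000000

variable {d : ℕ}

/-- Operator (spectral) norm of a real `d × d` matrix, acting on Euclidean space. -/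
noncomputable def matOpNorm (M : Matrix (Fin d) (Fin d) ℝ) : ℝ :=
  ‖Matrix.toEuclideanCLM (𝕜 := ℝ) M‖

/-- Apply a matrix to a vector of Euclidean space. -/
noncomputable def applyM (M : Matrix (Fin d) (Fin d) ℝ) (g : EuclideanSpace ℝ (Fin d)) :
    EuclideanSpace ℝ (Fin d) :=
  Matrix.toEuclideanCLM (𝕜 := ℝ) M g

/-- Ordered product `∏_{k=a}^{a+n-1} (I - α H k)`, factors ordered by increasing `k`. -/
def mulList (H : ℕ → Matrix (Fin d) (Fin d) ℝ) (α : ℝ) (a n : ℕ) :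
    Matrix (Fin d) (Fin d) ℝ :=
  ((List.range' a n).map (fun k => (1 : Matrix (Fin d) (Fin d) ℝ) - α • H k)).prod

/-- Truncated binomial expansion
`I + Σ_{l=1}^{L} Σ_{0 ≤ k₁ < … < k_l < K} ∏_{i=1}^{l} (-α H_{k_i})`,
with each inner product ordered by increasing index. -/
def binomSum (H : ℕ → Matrix (Fin d) (Fin d) ℝ) (α : ℝ) (K L : ℕ) :
    Matrix (Fin d) (Fin d) ℝ :=
  1 + ∑ l ∈ Finset.Icc 1 L, ∑ s ∈ (Finset.range K).powersetCard l,
      ((s.sort (· ≤ ·)).map (fun k => -(α • H k))).prod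

section Helpers

open scoped RealInnerProductSpace

lemma psd_inner_nonneg {M : Matrix (Fin d) (Fin d) ℝ} (hM : M.PosSemidef)
    (x : EuclideanSpace ℝ (Fin d)) : 0 ≤ ⟪x, Matrix.toEuclideanCLM (𝕜:=ℝ) M x⟫ := by
  have h := hM.dotProduct_mulVec_nonneg ((WithLp.equiv 2 (Fin d → ℝ)) x)
  simpa [dotProduct, PiLp.inner_apply, Matrix.ofLp_toEuclideanCLM, mulVec, mul_comm] using h

lemma herm_inner_symm {M : Matrix (Fin d) (Fin d) ℝ} (hM : M.IsHermitian)
    (x y : EuclideanSpace ℝ (Fin d)) :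
    ⟪Matrix.toEuclideanCLM (𝕜:=ℝ) M x, y⟫ = ⟪x, Matrix.toEuclideanCLM (𝕜:=ℝ) M y⟫ := by
  have h := (Matrix.isHermitian_iff_isSymmetric.mp hM) x y
  simpa [← Matrix.coe_toEuclideanCLM_eq_toEuclideanLin] using h

lemma matOpNorm_le_of_sandwich {c : ℝ} (hc : 0 ≤ c) {A : Matrix (Fin d) (Fin d) ℝ}
    (h1 : A.PosSemidef) (h2 : (c • (1 : Matrix (Fin d) (Fin d) ℝ) - A).PosSemidef) :
    matOpNorm A ≤ c := by
  set T := Matrix.toEuclideanCLM (𝕜 := ℝ) A with hT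
  have hsym : ∀ x y, ⟪T x, y⟫ = ⟪x, T y⟫ := herm_inner_symm h1.1
  have hpos : ∀ x, 0 ≤ ⟪x, T x⟫ := psd_inner_nonneg h1
  have hub : ∀ x : EuclideanSpace ℝ (Fin d), ⟪x, T x⟫ ≤ c * ‖x‖ ^ 2 := by
    intro x
    have h := psd_inner_nonneg h2 x
    rw [map_sub, _root_.map_smul, _root_.map_one] at h
    simp only [ContinuousLinearMap.sub_apply, ContinuousLinearMap.smul_apply,
      ContinuousLinearMap.one_apply, inner_sub_right, inner_smul_right,
      real_inner_self_eq_norm_sq] at h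
    linarith
  have CS : ∀ x y : EuclideanSpace ℝ (Fin d), ⟪x, T y⟫ ^ 2 ≤ ⟪x, T x⟫ * ⟪y, T y⟫ := by
    intro x y
    have key : ∀ t : ℝ, 0 ≤ ⟪y, T y⟫ * (t * t) + (2 * ⟪x, T y⟫) * t + ⟪x, T x⟫ := by
      intro t
      have h0 := hpos (x + t • y)
      have hyx : ⟪y, T x⟫ = ⟪x, T y⟫ := by rw [← hsym y x, real_inner_comm]
      rw [map_add, _root_.map_smul] at h0
      simp only [inner_add_left, inner_add_right, inner_smul_left, inner_smul_right,
        real_inner_smul_left, real_inner_smul_right, RCLike.star_def, conj_trivial] at h0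
      rw [hyx] at h0
      nlinarith [h0]
    have hd := discrim_le_zero key
    rw [discrim] at hd
    nlinarith
  rw [matOpNorm, ← hT]
  refine ContinuousLinearMap.opNorm_le_bound _ hc fun x => ?_
  have h4 := CS (T x) x
  have h5 : ⟪T x, T x⟫ = ‖T x‖ ^ 2 := real_inner_self_eq_norm_sq _
  have h6 := hub (T x)
  have h7 := hub x
  have h8 := hpos x
  have h10 := hpos (T x)
  have ha : (0:ℝ) ≤ ‖T x‖ := norm_nonneg _
  have hb : (0:ℝ) ≤ ‖x‖ := norm_nonneg _
  have key : ‖T x‖ ^ 2 ≤ (c * ‖x‖) ^ 2 := by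
    rcases eq_or_lt_of_le ha with h0 | h0
    · rw [← h0]; nlinarith [sq_nonneg (c * ‖x‖)]
    · nlinarith [mul_le_mul h6 h7 h8 (by positivity : (0:ℝ) ≤ c * ‖T x‖ ^ 2)]
  exact (pow_le_pow_iff_left₀ ha (by positivity) (by norm_num)).mp key

lemma psd_smul {M : Matrix (Fin d) (Fin d) ℝ} (hM : M.PosSemidef) {c : ℝ} (hc : 0 ≤ c) :
    (c • M).PosSemidef := by
  refine ⟨?_, fun x => ?_⟩
  · have ht := hM.1.eq
    simp only [Matrix.IsHermitian, Matrix.conjTranspose_smul, star_trivial, ht]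
  · exact (hM.smul hc).2 x

lemma matOpNorm_nonneg (A : Matrix (Fin d) (Fin d) ℝ) : 0 ≤ matOpNorm A := norm_nonneg _

lemma applyM_norm_le (A : Matrix (Fin d) (Fin d) ℝ) (g : EuclideanSpace ℝ (Fin d)) :
    ‖applyM A g‖ ≤ matOpNorm A * ‖g‖ := ContinuousLinearMap.le_opNorm _ _

lemma applyM_mul (A B : Matrix (Fin d) (Fin d) ℝ) (g : EuclideanSpace ℝ (Fin d)) :
    applyM (A * B) g = applyM A (applyM B g) := by
  simp [applyM, _root_.map_mul, ContinuousLinearMap.mul_apply]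

lemma applyM_sub (A B : Matrix (Fin d) (Fin d) ℝ) (g : EuclideanSpace ℝ (Fin d)) :
    applyM (A - B) g = applyM A g - applyM B g := by
  simp [applyM, map_sub, ContinuousLinearMap.sub_apply]

lemma matOpNorm_mul_le (A B : Matrix (Fin d) (Fin d) ℝ) :
    matOpNorm (A * B) ≤ matOpNorm A * matOpNorm B := by
  rw [matOpNorm, _root_.map_mul, ContinuousLinearMap.mul_def]
  exact ContinuousLinearMap.opNorm_comp_le _ _

lemma matOpNorm_one_le : matOpNorm (1 : Matrix (Fin d) (Fin d) ℝ) ≤ 1 := by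
  rw [matOpNorm, _root_.map_one, ContinuousLinearMap.one_def]
  exact ContinuousLinearMap.norm_id_le

lemma matOpNorm_smul (c : ℝ) (A : Matrix (Fin d) (Fin d) ℝ) :
    matOpNorm (c • A) ≤ |c| * matOpNorm A := by
  rw [matOpNorm, _root_.map_smul]
  simpa [matOpNorm] using norm_smul_le c (Matrix.toEuclideanCLM (𝕜 := ℝ) A)

lemma matOpNorm_sub_le (A B : Matrix (Fin d) (Fin d) ℝ) :
    matOpNorm (A - B) ≤ matOpNorm A + matOpNorm B := by
  rw [matOpNorm, map_sub]
  exact norm_sub_le _ _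

lemma mulList_succ (H : ℕ → Matrix (Fin d) (Fin d) ℝ) (α : ℝ) (a n : ℕ) :
    mulList H α a (n+1) = (1 - α • H a) * mulList H α (a+1) n := by
  simp [mulList, List.range'_succ]

lemma mulList_add (H : ℕ → Matrix (Fin d) (Fin d) ℝ) (α : ℝ) (a m n : ℕ) :
    mulList H α a (m+n) = mulList H α a m * mulList H α (a+m) n := by
  rw [mulList, ← List.range'_append_1, List.map_append, List.prod_append]
  rfl

lemma matOpNorm_mulList_le (Hm : ℕ → Matrix (Fin d) (Fin d) ℝ) (α c : ℝ) (hc : 0 ≤ c) :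
    ∀ n a, (∀ k, a ≤ k → k < a + n → matOpNorm ((1 : Matrix (Fin d) (Fin d) ℝ) - α • Hm k) ≤ c) →
      matOpNorm (mulList Hm α a n) ≤ c ^ n := by
  intro n
  induction n with
  | zero => intro a _; simpa [mulList] using matOpNorm_one_le
  | succ n ih =>
    intro a hk
    rw [mulList_succ]
    calc matOpNorm _ ≤ matOpNorm ((1 : Matrix (Fin d) (Fin d) ℝ) - α • Hm a)
          * matOpNorm (mulList Hm α (a+1) n) := matOpNorm_mul_le _ _
      _ ≤ c * c ^ n := mul_le_mul (hk a le_rfl (by omega))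
          (ih (a+1) fun k h1 h2 => hk k (by omega) (by omega)) (matOpNorm_nonneg _) hc
      _ = c ^ (n+1) := by ring

lemma matOpNorm_mulList_sub_one_le (Hm : ℕ → Matrix (Fin d) (Fin d) ℝ) (α β : ℝ) (hb : 0 ≤ β) :
    ∀ n a, (∀ k, a ≤ k → k < a + n → matOpNorm (α • Hm k) ≤ β) →
      matOpNorm (mulList Hm α a n - 1) ≤ (1+β)^n - 1 := by
  intro n
  induction n with
  | zero => intro a _; simp [mulList, matOpNorm]
  | succ n ih =>
    intro a hk
    have hfac : ∀ k, a ≤ k → k < a + (n+1) →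
        matOpNorm ((1 : Matrix (Fin d) (Fin d) ℝ) - α • Hm k) ≤ 1 + β := by
      intro k h1 h2
      calc matOpNorm ((1 : Matrix (Fin d) (Fin d) ℝ) - α • Hm k)
          ≤ matOpNorm (1 : Matrix (Fin d) (Fin d) ℝ) + matOpNorm (α • Hm k) :=
            matOpNorm_sub_le _ _
        _ ≤ 1 + β := add_le_add matOpNorm_one_le (hk k h1 h2)
    have hP : matOpNorm (mulList Hm α (a+1) n) ≤ (1+β)^n :=
      matOpNorm_mulList_le Hm α (1+β) (by linarith) n (a+1)
        (fun k h1 h2 => hfac k (by omega) (by omega))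
    have hsplit : mulList Hm α a (n+1) - 1
        = (mulList Hm α (a+1) n - 1) - (α • Hm a) * mulList Hm α (a+1) n := by
      rw [mulList_succ, sub_mul, one_mul]
      abel
    rw [hsplit]
    calc matOpNorm _
        ≤ matOpNorm (mulList Hm α (a+1) n - 1)
          + matOpNorm ((α • Hm a) * mulList Hm α (a+1) n) := matOpNorm_sub_le _ _
      _ ≤ ((1+β)^n - 1) + β * (1+β)^n :=
          add_le_add (ih (a+1) fun k h1 h2 => hk k (by omega) (by omega))
            ((matOpNorm_mul_le _ _).trans
              (mul_le_mul (hk a le_rfl (by omega)) hP (matOpNorm_nonneg _) hb))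
      _ = (1+β)^(n+1) - 1 := by ring

end Helpers

/-- TruncMAML error bound under local strong convexity:
`‖∏_{k=0}^{K-1}(I-αH_k) g - ∏_{k=K-L}^{K-1}(I-αH_k) g‖
  ≤ [(1+αH)^{K-M} - (1+αH)^{L-M}] (1-αh)^M ‖g‖`. -/
theorem truncmaml_error_bound_strong_convex (K L M : ℕ) (Hm : ℕ → Matrix (Fin d) (Fin d) ℝ)
    (α H h : ℝ) (hsymm : ∀ k, (Hm k).IsSymm)
    (hstrong : ∀ k, K - M ≤ k → k < K →
      (Hm k - h • (1 : Matrix (Fin d) (Fin d) ℝ)).PosSemidef ∧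
      (H • (1 : Matrix (Fin d) (Fin d) ℝ) - Hm k).PosSemidef)
    (hbdd : ∀ k, k < K - M → matOpNorm (Hm k) ≤ H)
    (hα : 0 < α) (hαH : α ≤ 1 / H) (hh : 0 < h) (hhH : h ≤ H)
    (hM1 : 1 ≤ M) (hML : M ≤ L) (hLK : L ≤ K) (g : EuclideanSpace ℝ (Fin d)) :
    ‖applyM (mulList Hm α 0 K) g - applyM (mulList Hm α (K - L) L) g‖
      ≤ ((1 + α * H) ^ (K - M) - (1 + α * H) ^ (L - M)) * (1 - α * h) ^ M * ‖g‖ := by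
  have hH : 0 < H := lt_of_lt_of_le hh hhH
  have hαH1 : α * H ≤ 1 := (le_div_iff₀ hH).mp hαH
  have hαh1 : α * h ≤ 1 := le_trans (by nlinarith) hαH1
  have hc2 : (0:ℝ) ≤ 1 - α * h := by linarith
  have hc1 : (0:ℝ) ≤ α * H := by positivity
  have hfacA : ∀ k, k < K - M → matOpNorm (α • Hm k) ≤ α * H := by
    intro k hkK
    refine (matOpNorm_smul α (Hm k)).trans ?_
    rw [abs_of_pos hα]
    exact mul_le_mul_of_nonneg_left (hbdd k hkK) hα.le
  have hfacA' : ∀ k, k < K - M →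
      matOpNorm ((1 : Matrix (Fin d) (Fin d) ℝ) - α • Hm k) ≤ 1 + α * H := fun k hkK =>
    (matOpNorm_sub_le _ _).trans (add_le_add matOpNorm_one_le (hfacA k hkK))
  have hfacB : ∀ k, K - M ≤ k → k < K →
      matOpNorm ((1 : Matrix (Fin d) (Fin d) ℝ) - α • Hm k) ≤ 1 - α * h := by
    intro k h1 h2
    obtain ⟨hs1, hs2⟩ := hstrong k h1 h2
    apply matOpNorm_le_of_sandwich hc2
    · have e : (1 : Matrix (Fin d) (Fin d) ℝ) - α • Hm k
          = (1 - α * H) • (1 : Matrix (Fin d) (Fin d) ℝ)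
            + α • (H • (1 : Matrix (Fin d) (Fin d) ℝ) - Hm k) := by
        module
      rw [e]
      exact (psd_smul Matrix.PosSemidef.one (by linarith)).add (psd_smul hs2 hα.le)
    · have e : (1 - α * h) • (1 : Matrix (Fin d) (Fin d) ℝ)
          - ((1 : Matrix (Fin d) (Fin d) ℝ) - α • Hm k)
          = α • (Hm k - h • (1 : Matrix (Fin d) (Fin d) ℝ)) := by
        module
      rw [e]
      exact psd_smul hs1 hα.le
  -- splittings
  have eA : mulList Hm α 0 K = mulList Hm α 0 (K-L) * mulList Hm α (K-L) L := by
    calc mulList Hm α 0 K = mulList Hm α 0 ((K-L)+L) := by rw [show (K-L)+L = K by omega]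
      _ = mulList Hm α 0 (K-L) * mulList Hm α (0+(K-L)) L := mulList_add _ _ _ _ _
      _ = _ := by rw [Nat.zero_add]
  have eB : mulList Hm α (K-L) L = mulList Hm α (K-L) (L-M) * mulList Hm α (K-M) M := by
    calc mulList Hm α (K-L) L = mulList Hm α (K-L) ((L-M)+M) := by
          rw [show (L-M)+M = L by omega]
      _ = mulList Hm α (K-L) (L-M) * mulList Hm α ((K-L)+(L-M)) M := mulList_add _ _ _ _ _
      _ = _ := by rw [show (K-L)+(L-M) = K-M by omega]
  rw [eA, eB]
  have hdiff : applyM (mulList Hm α 0 (K-L) * (mulList Hm α (K-L) (L-M) * mulList Hm α (K-M) M)) g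
      - applyM (mulList Hm α (K-L) (L-M) * mulList Hm α (K-M) M) g
      = applyM (mulList Hm α 0 (K-L) - 1)
          (applyM (mulList Hm α (K-L) (L-M)) (applyM (mulList Hm α (K-M) M) g)) := by
    rw [← applyM_mul, ← applyM_mul, ← applyM_sub]
    congr 1
    noncomm_ring
  rw [hdiff]
  have b1 : matOpNorm (mulList Hm α 0 (K-L) - 1) ≤ (1+α*H)^(K-L) - 1 :=
    matOpNorm_mulList_sub_one_le Hm α (α*H) hc1 (K-L) 0 (fun k _ h2 => hfacA k (by omega))
  have b2 : matOpNorm (mulList Hm α (K-L) (L-M)) ≤ (1+α*H)^(L-M) :=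
    matOpNorm_mulList_le Hm α (1+α*H) (by linarith) (L-M) (K-L)
      (fun k h1 h2 => hfacA' k (by omega))
  have b3 : matOpNorm (mulList Hm α (K-M) M) ≤ (1-α*h)^M :=
    matOpNorm_mulList_le Hm α (1-α*h) hc2 M (K-M)
      (fun k h1 h2 => hfacB k (by omega) (by omega))
  have hb3 : ‖applyM (mulList Hm α (K-M) M) g‖ ≤ (1-α*h)^M * ‖g‖ :=
    (applyM_norm_le _ _).trans (mul_le_mul_of_nonneg_right b3 (norm_nonneg _))
  have hb2 : ‖applyM (mulList Hm α (K-L) (L-M)) (applyM (mulList Hm α (K-M) M) g)‖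
      ≤ (1+α*H)^(L-M) * ((1-α*h)^M * ‖g‖) :=
    (applyM_norm_le _ _).trans (mul_le_mul b2 hb3 (norm_nonneg _) (by positivity))
  have hone : (0:ℝ) ≤ (1+α*H)^(K-L) - 1 := by
    have := one_le_pow₀ (show (1:ℝ) ≤ 1 + α*H by linarith) (n := K-L)
    linarith
  calc ‖applyM (mulList Hm α 0 (K-L) - 1)
        (applyM (mulList Hm α (K-L) (L-M)) (applyM (mulList Hm α (K-M) M) g))‖
      ≤ ((1+α*H)^(K-L) - 1) * ((1+α*H)^(L-M) * ((1-α*h)^M * ‖g‖)) :=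
        (applyM_norm_le _ _).trans
          (mul_le_mul b1 hb2 (norm_nonneg _) hone)
    _ = ((1+α*H)^(K-L) * (1+α*H)^(L-M) - (1+α*H)^(L-M)) * (1-α*h)^M * ‖g‖ := by ring
    _ = ((1 + α * H) ^ (K - M) - (1 + α * H) ^ (L - M)) * (1 - α * h) ^ M * ‖g‖ := by
        rw [← pow_add, show (K-L)+(L-M) = K-M by omega]
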